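/- For all Milner expressions e, f, every variable v and every n ∈ ℕ: if e ~^(n) f then μv.e ~^(n) μv.f. Consequently, the recursion operator is nonexpansive for the behavioural distance: bd(μv.e, μv.f) ≤ bd(e, f). -/

import Mathlib

open Classical in
/-- The lifting `d↑` of a distance function on `X` to `Σ × X + V`. -/
noncomputable def distLift {A V X : Type*} (d : X → X → ℝ) :
    ((A × X) ⊕ V) → ((A × X) ⊕ V) → ℝ
  | Sum.inl (a, x), Sum.inl (b, y) => if a = b then (1 / 2) * d x y else 1
  | Sum.inr v, Sum.inr w => if v = w then 0 else 1
  | _, _ => 1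

/-- Supremum of `f` over a finite set, with the convention `sup ∅ = 0`. -/
noncomputable def hSup {Y : Type*} (s : Finset Y) (f : Y → ℝ) : ℝ :=
  if h : s.Nonempty then s.sup' h f else 0

/-- Infimum of `f` over a finite set, with the convention `inf ∅ = 1`. -/
noncomputable def hInf {Y : Type*} (s : Finset Y) (f : Y → ℝ) : ℝ :=
  if h : s.Nonempty then s.inf' h f else 1

/-- Hausdorff lifting of a distance function to finite subsets. -/
noncomputable def hausdorffDist {X : Type*} (d : X → X → ℝ) (s t : Finset X) : ℝ :=
  max (hSup s fun x => hInf t fun y => d x y) (hSup t fun y => hInf s fun x => d y x)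

/-- The map `Φ_β` associated with a prechart `(Q, β)`. -/
noncomputable def Phi {A V Q : Type*} (β : Q → Finset ((A × Q) ⊕ V))
    (d : Q → Q → ℝ) : Q → Q → ℝ :=
  fun q₁ q₂ => hausdorffDist (distLift d) (β q₁) (β q₂)

/-- `d` is a 1-bounded pseudometric on `X`. -/
structure IsBPMet {X : Type*} (d : X → X → ℝ) : Prop where
  nonneg : ∀ x y, 0 ≤ d x y
  le_one : ∀ x y, d x y ≤ 1
  refl : ∀ x, d x x = 0
  symm : ∀ x y, d x y = d y x
  triangle : ∀ x y z, d x z ≤ d x y + d y z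

/-- A bisimulation between two precharts. -/
def IsBisim {A V Q₁ Q₂ : Type*} (β₁ : Q₁ → Finset ((A × Q₁) ⊕ V))
    (β₂ : Q₂ → Finset ((A × Q₂) ⊕ V)) (R : Q₁ → Q₂ → Prop) : Prop :=
  ∀ q₁ q₂, R q₁ q₂ →
    (∀ v : V, Sum.inr v ∈ β₁ q₁ ↔ Sum.inr v ∈ β₂ q₂) ∧
    (∀ (a : A) (q₁' : Q₁), Sum.inl (a, q₁') ∈ β₁ q₁ →
      ∃ q₂', Sum.inl (a, q₂') ∈ β₂ q₂ ∧ R q₁' q₂') ∧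
    (∀ (a : A) (q₂' : Q₂), Sum.inl (a, q₂') ∈ β₂ q₂ →
      ∃ q₁', Sum.inl (a, q₁') ∈ β₁ q₁ ∧ R q₁' q₂')

/-- Bisimilarity of two states of a prechart. -/
def Bisimilar {A V Q : Type*} (β : Q → Finset ((A × Q) ⊕ V)) (q₁ q₂ : Q) : Prop :=
  ∃ R, IsBisim β β R ∧ R q₁ q₂

/-- A prechart homomorphism: a function whose graph is a bisimulation. -/
def IsHom {A V Q₁ Q₂ : Type*} (β₁ : Q₁ → Finset ((A × Q₁) ⊕ V))
    (β₂ : Q₂ → Finset ((A × Q₂) ⊕ V)) (f : Q₁ → Q₂) : Prop :=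
  IsBisim β₁ β₂ fun q₁ q₂ => q₂ = f q₁

/-- Stratification of bisimilarity between two precharts. -/
def Strat2 {A V Q₁ Q₂ : Type*} (β₁ : Q₁ → Finset ((A × Q₁) ⊕ V))
    (β₂ : Q₂ → Finset ((A × Q₂) ⊕ V)) : ℕ → Q₁ → Q₂ → Prop
  | 0 => fun _ _ => True
  | n + 1 => fun q₁ q₂ =>
      (∀ v : V, Sum.inr v ∈ β₁ q₁ ↔ Sum.inr v ∈ β₂ q₂) ∧
      (∀ (a : A) (q₁' : Q₁), Sum.inl (a, q₁') ∈ β₁ q₁ →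
        ∃ q₂', Sum.inl (a, q₂') ∈ β₂ q₂ ∧ Strat2 β₁ β₂ n q₁' q₂') ∧
      (∀ (a : A) (q₂' : Q₂), Sum.inl (a, q₂') ∈ β₂ q₂ →
        ∃ q₁', Sum.inl (a, q₁') ∈ β₁ q₁ ∧ Strat2 β₁ β₂ n q₁' q₂')

/-- Stratification of bisimilarity on a single prechart. -/
def Strat {A V Q : Type*} (β : Q → Finset ((A × Q) ⊕ V)) : ℕ → Q → Q → Prop :=
  Strat2 β β

/-- One-step transition relation of a prechart. -/
def StepRel {A V Q : Type*} (β : Q → Finset ((A × Q) ⊕ V)) (q q' : Q) : Prop :=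
  ∃ a : A, Sum.inl (a, q') ∈ β q

/-- A prechart is locally finite if every state reaches only finitely many states. -/
def LocFinite {A V Q : Type*} (β : Q → Finset ((A × Q) ⊕ V)) : Prop :=
  ∀ q : Q, {q' | Relation.ReflTransGen (StepRel β) q q'}.Finite

/-- `bd` is the least fixpoint of `Φ_β` in the lattice of 1-bounded pseudometrics. -/
def IsLfpDist {A V Q : Type*} (β : Q → Finset ((A × Q) ⊕ V)) (bd : Q → Q → ℝ) : Prop :=
  IsBPMet bd ∧ Phi β bd = bd ∧
    ∀ d : Q → Q → ℝ, IsBPMet d → Phi β d = d → ∀ x y, bd x y ≤ d x y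

open Classical in
/-- The discrete pseudometric, the top element of `D_X`. -/
noncomputable def discreteDist {X : Type*} : X → X → ℝ :=
  fun x y => if x = y then 0 else 1

/-- Iterates `Φ_β^{(p)}` of `Φ_β` starting from the discrete pseudometric. -/
noncomputable def PhiIter {A V Q : Type*} (β : Q → Finset ((A × Q) ⊕ V)) :
    ℕ → Q → Q → ℝ
  | 0 => discreteDist
  | n + 1 => Phi β (PhiIter β n)


/-- Milner expressions over an alphabet `A`, with variables drawn from `ℕ`
(a countably infinite set of variables). -/
inductive Exp (A : Type*) : Type _ where
  | zero : Exp A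
  | var : ℕ → Exp A
  | act : A → Exp A → Exp A
  | plus : Exp A → Exp A → Exp A
  | mu : ℕ → Exp A → Exp A
deriving DecidableEq

namespace Exp

/-- Free variables of an expression. -/
def fv {A : Type*} : Exp A → Finset ℕ
  | .zero => ∅
  | .var v => {v}
  | .act _ e => fv e
  | .plus e f => fv e ∪ fv f
  | .mu v e => (fv e).erase v

/-- A fresh variable not belonging to the given finite set. -/
def freshVar (s : Finset ℕ) : ℕ := s.sup id + 1

/-- Simultaneous capture-avoiding substitution: `subst σ e` substitutes `σ w` for every
free occurrence of each variable `w` in `e`, renaming the bound variable of a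
`μ`-binder whenever it would capture a free variable of a substituted expression. -/
def subst {A : Type*} : (ℕ → Exp A) → Exp A → Exp A
  | _, .zero => .zero
  | σ, .var v => σ v
  | σ, .act a e => .act a (subst σ e)
  | σ, .plus e f => .plus (subst σ e) (subst σ f)
  | σ, .mu v e =>
      let S : Finset ℕ := ((fv e).erase v).biUnion fun w => fv (σ w)
      let v' : ℕ := if v ∈ S then freshVar S else v
      .mu v' (subst (Function.update σ v (.var v')) e)

/-- Substitution of a single expression `t` for the variable `v`. -/
def subst1 {A : Type*} (e : Exp A) (v : ℕ) (t : Exp A) : Exp A :=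
  subst (Function.update Exp.var v t) e
end Exp

section Dest
variable {A : Type*} [DecidableEq A]

/-- Successors contributed by one transition/output of the body of `μv.e`,
where `me = μv.e`. -/
def destStep (v : ℕ) (me : Exp A) : ((A × Exp A) ⊕ ℕ) → Finset ((A × Exp A) ⊕ ℕ)
  | Sum.inl (a, e') => {Sum.inl (a, Exp.subst1 e' v me)}
  | Sum.inr w => if w = v then ∅ else {Sum.inr w}

/-- The prechart structure on Milner expressions, given by the operational rules:
`a.e →a e`; `v ▷ v`; `e + f` inherits the transitions and outputs of `e` and `f`;
`μw.e ▷ v` when `e ▷ v` and `v ≠ w`; `μv.e →a e'[μv.e/v]` whenever `e →a e'`. -/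
def dest : Exp A → Finset ((A × Exp A) ⊕ ℕ)
  | .zero => ∅
  | .var v => {Sum.inr v}
  | .act a e => {Sum.inl (a, e)}
  | .plus e f => dest e ∪ dest f
  | .mu v e => (dest e).biUnion (destStep v (.mu v e))

end Dest


namespace MuAux

open Exp Sum

section Basic
variable {A V Q : Type*} {β : Q → Finset ((A × Q) ⊕ V)}

theorem strat_succ_iff {n : ℕ} {q₁ q₂ : Q} :
    Strat β (n+1) q₁ q₂ ↔
      ((∀ v : V, Sum.inr v ∈ β q₁ ↔ Sum.inr v ∈ β q₂) ∧
      (∀ (a : A) (q₁' : Q), Sum.inl (a, q₁') ∈ β q₁ →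
        ∃ q₂', Sum.inl (a, q₂') ∈ β q₂ ∧ Strat β n q₁' q₂') ∧
      (∀ (a : A) (q₂' : Q), Sum.inl (a, q₂') ∈ β q₂ →
        ∃ q₁', Sum.inl (a, q₁') ∈ β q₁ ∧ Strat β n q₁' q₂')) := Iff.rfl

theorem strat_zero (q₁ q₂ : Q) : Strat β 0 q₁ q₂ := trivial

theorem strat_refl : ∀ (n : ℕ) (q : Q), Strat β n q q := by
  intro n
  induction n with
  | zero => exact fun q => trivial
  | succ n ih =>
    intro q
    exact ⟨fun v => Iff.rfl, fun a q' h => ⟨q', h, ih q'⟩, fun a q' h => ⟨q', h, ih q'⟩⟩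

theorem strat_symm : ∀ {n : ℕ} {q₁ q₂ : Q}, Strat β n q₁ q₂ → Strat β n q₂ q₁ := by
  intro n
  induction n with
  | zero => exact fun _ => trivial
  | succ n ih =>
    rintro q₁ q₂ ⟨h1, h2, h3⟩
    exact ⟨fun v => (h1 v).symm,
      fun a q' h => by obtain ⟨p, hp, hs⟩ := h3 a q' h; exact ⟨p, hp, ih hs⟩,
      fun a q' h => by obtain ⟨p, hp, hs⟩ := h2 a q' h; exact ⟨p, hp, ih hs⟩⟩

theorem strat_trans : ∀ {n : ℕ} {q₁ q₂ q₃ : Q},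
    Strat β n q₁ q₂ → Strat β n q₂ q₃ → Strat β n q₁ q₃ := by
  intro n
  induction n with
  | zero => exact fun _ _ => trivial
  | succ n ih =>
    rintro q₁ q₂ q₃ ⟨h1, h2, h3⟩ ⟨g1, g2, g3⟩
    refine ⟨fun v => (h1 v).trans (g1 v), ?_, ?_⟩
    · intro a q' h
      obtain ⟨p, hp, hs⟩ := h2 a q' h
      obtain ⟨r, hr, hs'⟩ := g2 a p hp
      exact ⟨r, hr, ih hs hs'⟩
    · intro a q' h
      obtain ⟨p, hp, hs⟩ := g3 a q' h
      obtain ⟨r, hr, hs'⟩ := h3 a p hp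
      exact ⟨r, hr, ih hs' hs⟩

theorem strat_succ_le : ∀ {n : ℕ} {q₁ q₂ : Q}, Strat β (n+1) q₁ q₂ → Strat β n q₁ q₂ := by
  intro n
  induction n with
  | zero => exact fun _ => trivial
  | succ n ih =>
    rintro q₁ q₂ ⟨h1, h2, h3⟩
    refine ⟨h1, ?_, ?_⟩
    · intro a q' h
      obtain ⟨p, hp, hs⟩ := h2 a q' h
      exact ⟨p, hp, ih hs⟩
    · intro a q' h
      obtain ⟨p, hp, hs⟩ := h3 a q' h
      exact ⟨p, hp, ih hs⟩

theorem strat_antitone {n m : ℕ} (hnm : n ≤ m) {q₁ q₂ : Q} (h : Strat β m q₁ q₂) :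
    Strat β n q₁ q₂ := by
  induction m with
  | zero => exact (Nat.le_zero.mp hnm) ▸ h
  | succ m ih =>
    rcases Nat.lt_or_ge n (m+1) with hl | hl
    · exact ih (Nat.lt_succ_iff.mp hl) (strat_succ_le h)
    · exact Nat.le_antisymm hnm hl ▸ h

end Basic

end MuAux

namespace MuAux
open Exp Sum

section Syntactic
set_option linter.unusedSectionVars false
variable {A : Type*} [DecidableEq A]

/-- The set avoided when substituting under a binder. -/
def bindS (σ : ℕ → Exp A) (v : ℕ) (e : Exp A) : Finset ℕ :=
  ((fv e).erase v).biUnion fun w => fv (σ w)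

/-- The chosen binder variable. -/
def bindV (σ : ℕ → Exp A) (v : ℕ) (e : Exp A) : ℕ :=
  if v ∈ bindS σ v e then freshVar (bindS σ v e) else v

theorem subst_mu (σ : ℕ → Exp A) (v : ℕ) (e : Exp A) :
    subst σ (.mu v e) =
      .mu (bindV σ v e) (subst (Function.update σ v (.var (bindV σ v e))) e) := rfl

theorem freshVar_not_mem (s : Finset ℕ) : freshVar s ∉ s := by
  intro h
  have := Finset.le_sup (f := id) h
  simp only [Exp.freshVar, id] at this ⊢
  omega

theorem bindV_not_mem (σ : ℕ → Exp A) (v : ℕ) (e : Exp A) :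
    bindV σ v e ∉ bindS σ v e := by
  unfold bindV
  split
  · exact freshVar_not_mem _
  · assumption

theorem bindV_not_mem_fv {σ : ℕ → Exp A} {v : ℕ} {e : Exp A} {u : ℕ}
    (hu : u ∈ fv e) (huv : u ≠ v) : bindV σ v e ∉ fv (σ u) := by
  intro h
  exact bindV_not_mem σ v e (Finset.mem_biUnion.mpr ⟨u, Finset.mem_erase.mpr ⟨huv, hu⟩, h⟩)

theorem out_fv : ∀ {e : Exp A} {u : ℕ}, Sum.inr u ∈ dest e → u ∈ fv e := by
  intro e
  induction e with
  | zero => simp [dest]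
  | var v => simp [dest, fv]
  | act a e ih => simp [dest]
  | plus e f ihe ihf =>
    intro u h
    simp only [dest, Finset.mem_union] at h
    rcases h with h | h
    · exact Finset.mem_union_left _ (ihe h)
    · exact Finset.mem_union_right _ (ihf h)
  | mu v e ih =>
    intro u h
    simp only [dest, Finset.mem_biUnion] at h
    obtain ⟨m, hm, h⟩ := h
    match m with
    | Sum.inl (a, e') => simp [destStep] at h
    | Sum.inr w =>
      simp only [destStep] at h
      split at h
      · simp at h
      · simp only [Finset.mem_singleton, Sum.inr.injEq] at h
        subst h
        exact Finset.mem_erase.mpr ⟨by assumption, ih hm⟩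

theorem subst_ext : ∀ {e : Exp A} {σ τ : ℕ → Exp A},
    (∀ u ∈ fv e, σ u = τ u) → subst σ e = subst τ e := by
  intro e
  induction e with
  | zero => intro σ τ h; rfl
  | var v => intro σ τ h; exact h v (by simp [fv])
  | act a e ih =>
    intro σ τ h
    simp only [subst, act.injEq, true_and]
    exact ih fun u hu => h u (by simpa [fv] using hu)
  | plus e f ihe ihf =>
    intro σ τ h
    simp only [subst, plus.injEq]
    exact ⟨ihe fun u hu => h u (by simp [fv, hu]), ihf fun u hu => h u (by simp [fv, hu])⟩
  | mu v e ih =>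
    intro σ τ h
    rw [subst_mu, subst_mu]
    have hS : bindS σ v e = bindS τ v e := by
      unfold bindS
      refine Finset.biUnion_congr rfl fun u hu => ?_
      rw [h u (by simpa [fv] using hu)]
    have hV : bindV σ v e = bindV τ v e := by unfold bindV; rw [hS]
    rw [hV]
    congr 1
    refine ih fun u hu => ?_
    rcases eq_or_ne u v with rfl | huv
    · simp [Function.update]
    · rw [Function.update_of_ne huv, Function.update_of_ne huv]
      exact h u (by simp [fv, Finset.mem_erase, huv, hu])

theorem subst_var_eq : ∀ e : Exp A, subst Exp.var e = e := by
  intro e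
  induction e with
  | zero => rfl
  | var v => rfl
  | act a e ih => simp only [subst, ih]
  | plus e f ihe ihf => simp only [subst, ihe, ihf]
  | mu v e ih =>
    rw [subst_mu]
    have hS : bindS (Exp.var (A := A)) v e = (fv e).erase v := by
      unfold bindS
      ext u
      simp [fv]
    have hV : bindV (Exp.var (A := A)) v e = v := by
      unfold bindV
      rw [hS]
      simp
    rw [hV]
    rw [show Function.update (Exp.var (A := A)) v (Exp.var v) = Exp.var from
      Function.update_eq_self v Exp.var]
    rw [ih]

theorem subst_fv_id {e : Exp A} {σ : ℕ → Exp A} (h : ∀ u ∈ fv e, σ u = Exp.var u) :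
    subst σ e = e := by
  rw [subst_ext h, subst_var_eq]

theorem fv_subst : ∀ (e : Exp A) (σ : ℕ → Exp A),
    fv (subst σ e) = (fv e).biUnion fun w => fv (σ w) := by
  intro e
  induction e with
  | zero => intro σ; simp [fv, subst]
  | var v => intro σ; simp [fv, subst]
  | act a e ih => intro σ; simpa [fv, subst] using ih σ
  | plus e f ihe ihf =>
    intro σ
    simp only [fv, subst, ihe, ihf]
    ext u
    simp only [Finset.mem_union, Finset.mem_biUnion]
    constructor
    · rintro (⟨w, hw, hu⟩ | ⟨w, hw, hu⟩)
      · exact ⟨w, Or.inl hw, hu⟩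
      · exact ⟨w, Or.inr hw, hu⟩
    · rintro ⟨w, hw | hw, hu⟩
      · exact Or.inl ⟨w, hw, hu⟩
      · exact Or.inr ⟨w, hw, hu⟩
  | mu v e ih =>
    intro σ
    rw [subst_mu]
    set v' := bindV σ v e with hv'
    set σ' := Function.update σ v (.var v') with hσ'
    have key : fv (subst σ' e) = (fv e).biUnion fun w => fv (σ' w) := ih σ'
    show (fv (subst σ' e)).erase v' = ((fv e).erase v).biUnion fun w => fv (σ w)
    rw [key]
    ext u
    simp only [Finset.mem_erase, Finset.mem_biUnion]
    constructor
    · rintro ⟨huv', w, hw, hu⟩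
      rcases eq_or_ne w v with rfl | hwv
      · rw [hσ'] at hu
        simp only [Function.update_self, fv, Finset.mem_singleton] at hu
        exact absurd hu huv'
      · rw [hσ', Function.update_of_ne hwv] at hu
        exact ⟨w, ⟨hwv, hw⟩, hu⟩
    · rintro ⟨w, ⟨hwv, hw⟩, hu⟩
      refine ⟨?_, w, hw, by rw [hσ', Function.update_of_ne hwv]; exact hu⟩
      intro huv'
      subst huv'
      exact bindV_not_mem_fv hw hwv hu

theorem fv_step : ∀ {e : Exp A} {a : A} {x : Exp A},
    Sum.inl (a, x) ∈ dest e → fv x ⊆ fv e := by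
  intro e
  induction e with
  | zero => simp [dest]
  | var v => simp [dest]
  | act a e ih =>
    intro a' x h
    simp only [dest, Finset.mem_singleton, Sum.inl.injEq, Prod.mk.injEq] at h
    rw [← h.2]
    exact Finset.Subset.refl _
  | plus e f ihe ihf =>
    intro a x h
    simp only [dest, Finset.mem_union] at h
    rcases h with h | h
    · exact (ihe h).trans (Finset.subset_union_left)
    · exact (ihf h).trans (Finset.subset_union_right)
  | mu v e ih =>
    intro a x h
    simp only [dest, Finset.mem_biUnion] at h
    obtain ⟨m, hm, h⟩ := h
    match m with
    | Sum.inr w => simp only [destStep] at h; split at h <;> simp at h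
    | Sum.inl (b, e') =>
      simp only [destStep, Finset.mem_singleton, Sum.inl.injEq, Prod.mk.injEq] at h
      obtain ⟨rfl, rfl⟩ := h
      show fv (Exp.subst1 e' v (.mu v e)) ⊆ fv (Exp.mu v e)
      rw [Exp.subst1, fv_subst]
      intro u hu
      simp only [Finset.mem_biUnion] at hu
      obtain ⟨w, hw, hu⟩ := hu
      rcases eq_or_ne w v with rfl | hwv
      · rwa [Function.update_self] at hu
      · rw [Function.update_of_ne hwv] at hu
        simp only [fv, Finset.mem_singleton] at hu
        subst hu
        exact Finset.mem_erase.mpr ⟨hwv, ih hm hw⟩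

end Syntactic
end MuAux

namespace MuAux
open Exp Sum

section DestSyn
set_option linter.unusedSectionVars false
variable {A : Type*} [DecidableEq A]

theorem inl_mem_dest_mu_iff {v : ℕ} {t : Exp A} {a : A} {x : Exp A} :
    Sum.inl (a, x) ∈ dest (Exp.mu v t) ↔
      ∃ t', Sum.inl (a, t') ∈ dest t ∧ x = Exp.subst1 t' v (.mu v t) := by
  simp only [dest, Finset.mem_biUnion]
  constructor
  · rintro ⟨m, hm, h⟩
    match m with
    | Sum.inr w =>
      simp only [destStep] at h
      split at h <;> simp at h
    | Sum.inl (b, t') =>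
      simp only [destStep, Finset.mem_singleton, Sum.inl.injEq, Prod.mk.injEq] at h
      obtain ⟨rfl, rfl⟩ := h
      exact ⟨t', hm, rfl⟩
  · rintro ⟨t', ht', rfl⟩
    exact ⟨Sum.inl (a, t'), ht', by simp [destStep]⟩

theorem inr_mem_dest_mu_iff {v : ℕ} {t : Exp A} {u : ℕ} :
    Sum.inr u ∈ dest (Exp.mu v t) ↔ Sum.inr u ∈ dest t ∧ u ≠ v := by
  simp only [dest, Finset.mem_biUnion]
  constructor
  · rintro ⟨m, hm, h⟩
    match m with
    | Sum.inl (b, t') => simp [destStep] at h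
    | Sum.inr w =>
      simp only [destStep] at h
      split at h
      · simp at h
      · simp only [Finset.mem_singleton, Sum.inr.injEq] at h
        subst h
        exact ⟨hm, by assumption⟩
  · rintro ⟨hu, huv⟩
    exact ⟨Sum.inr u, hu, by simp [destStep, huv]⟩

theorem out_subst : ∀ {e : Exp A} {σ : ℕ → Exp A} {u : ℕ},
    Sum.inr u ∈ dest (subst σ e) ↔ ∃ w, Sum.inr w ∈ dest e ∧ Sum.inr u ∈ dest (σ w) := by
  intro e
  induction e with
  | zero => simp [dest, subst]
  | var v => simp [dest, subst]
  | act a e ih => simp [dest, subst]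
  | plus e f ihe ihf =>
    intro σ u
    show Sum.inr u ∈ dest (subst σ e) ∪ dest (subst σ f) ↔ _
    rw [Finset.mem_union, ihe, ihf]
    show _ ↔ ∃ w, Sum.inr w ∈ dest e ∪ dest f ∧ _
    constructor
    · rintro (⟨w, hw, hu⟩ | ⟨w, hw, hu⟩)
      · exact ⟨w, Finset.mem_union_left _ hw, hu⟩
      · exact ⟨w, Finset.mem_union_right _ hw, hu⟩
    · rintro ⟨w, hw, hu⟩
      rcases Finset.mem_union.mp hw with hw | hw
      · exact Or.inl ⟨w, hw, hu⟩
      · exact Or.inr ⟨w, hw, hu⟩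
  | mu v t ih =>
    intro σ u
    rw [subst_mu]
    set v' := bindV σ v t with hv'
    set σ' := Function.update σ v (.var v') with hσ'
    rw [inr_mem_dest_mu_iff]
    rw [ih]
    constructor
    · rintro ⟨⟨w, hw, hu⟩, huv'⟩
      rcases eq_or_ne w v with rfl | hwv
      · rw [hσ', Function.update_self] at hu
        simp only [dest, Finset.mem_singleton, Sum.inr.injEq] at hu
        exact absurd hu huv'
      · rw [hσ', Function.update_of_ne hwv] at hu
        exact ⟨w, inr_mem_dest_mu_iff.mpr ⟨hw, hwv⟩, hu⟩
    · rintro ⟨w, hw, hu⟩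
      obtain ⟨hw, hwv⟩ := inr_mem_dest_mu_iff.mp hw
      refine ⟨⟨w, hw, by rw [hσ', Function.update_of_ne hwv]; exact hu⟩, ?_⟩
      intro h
      subst h
      exact bindV_not_mem_fv (out_fv hw) hwv (out_fv hu)

/-- "E": transitions of `σ w` for an output `w` of `e` are transitions of `subst σ e`. -/
theorem inl_subst_of_out : ∀ {e : Exp A} {σ : ℕ → Exp A} {w : ℕ} {a : A} {y : Exp A},
    Sum.inr w ∈ dest e → Sum.inl (a, y) ∈ dest (σ w) → Sum.inl (a, y) ∈ dest (subst σ e) := by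
  intro e
  induction e with
  | zero => simp [dest]
  | var v =>
    intro σ w a y hw hy
    simp only [dest, Finset.mem_singleton, Sum.inr.injEq] at hw
    subst hw
    exact hy
  | act a e ih => simp [dest]
  | plus e f ihe ihf =>
    intro σ w a y hw hy
    simp only [dest, Finset.mem_union] at hw ⊢
    rcases hw with hw | hw
    · exact Finset.mem_union_left _ (ihe hw hy)
    · exact Finset.mem_union_right _ (ihf hw hy)
  | mu v t ih =>
    intro σ w a y hw hy
    obtain ⟨hw, hwv⟩ := inr_mem_dest_mu_iff.mp hw
    rw [subst_mu]
    set v' := bindV σ v t with hv'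
    set σ' := Function.update σ v (.var v') with hσ'
    have hy' : Sum.inl (a, y) ∈ dest (σ' w) := by
      rw [hσ', Function.update_of_ne hwv]; exact hy
    have hmem := ih (σ := σ') hw hy'
    rw [inl_mem_dest_mu_iff]
    refine ⟨y, hmem, ?_⟩
    rw [Exp.subst1]
    refine (subst_fv_id fun u hu => ?_).symm
    rw [Function.update_of_ne]
    intro h
    subst h
    exact bindV_not_mem_fv (out_fv hw) hwv (fv_step hy hu)

end DestSyn
end MuAux

namespace MuAux
open Exp Sum

section Pack
set_option linter.unusedSectionVars false
set_option maxHeartbeats 1000000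
variable {A : Type*} [DecidableEq A]

/-- Congruence of level-`n` stratified bisimilarity under simultaneous substitution. -/
def AcongP (A : Type*) [DecidableEq A] (n : ℕ) : Prop :=
  ∀ (e f : Exp A) (σ τ : ℕ → Exp A), Strat dest n e f →
    (∀ w, Strat dest n (σ w) (τ w)) → Strat dest n (subst σ e) (subst τ f)

/-- Composition of substitutions, up to level-`n` stratified bisimilarity. -/
def BcompP (A : Type*) [DecidableEq A] (n : ℕ) : Prop :=
  ∀ (e : Exp A) (σ τ : ℕ → Exp A),
    Strat dest n (subst τ (subst σ e)) (subst (fun w => subst τ (σ w)) e)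

/-- Alpha-renaming of the bound variable, up to level-`n` stratified bisimilarity. -/
def AlphaP (A : Type*) [DecidableEq A] (n : ℕ) : Prop :=
  ∀ (t : Exp A) (w : ℕ) (ρ : ℕ → Exp A) (b c : ℕ), b ∉ bindS ρ w t → c ∉ bindS ρ w t →
    Strat dest n (.mu b (subst (Function.update ρ w (.var b)) t))
      (.mu c (subst (Function.update ρ w (.var c)) t))

/-- `μv` preserves level-`n` stratified bisimilarity. -/
def MuP (A : Type*) [DecidableEq A] (n : ℕ) : Prop :=
  ∀ (e f : Exp A) (v : ℕ), Strat dest n e f → Strat dest n (.mu v e) (.mu v f)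

theorem plus_cong : ∀ {n : ℕ} {x₁ y₁ x₂ y₂ : Exp A}, Strat dest n x₁ y₁ →
    Strat dest n x₂ y₂ → Strat dest n (Exp.plus x₁ x₂) (Exp.plus y₁ y₂) := by
  intro n x₁ y₁ x₂ y₂ h1 h2
  match n, h1, h2 with
  | 0, _, _ => exact trivial
  | n+1, ⟨a1, a2, a3⟩, ⟨b1, b2, b3⟩ =>
    refine ⟨?_, ?_, ?_⟩
    · intro v
      show Sum.inr v ∈ dest x₁ ∪ dest x₂ ↔ Sum.inr v ∈ dest y₁ ∪ dest y₂
      rw [Finset.mem_union, Finset.mem_union, a1 v, b1 v]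
    · intro a q' h
      rcases Finset.mem_union.mp h with h | h
      · obtain ⟨p, hp, hs⟩ := a2 a q' h
        exact ⟨p, Finset.mem_union_left _ hp, hs⟩
      · obtain ⟨p, hp, hs⟩ := b2 a q' h
        exact ⟨p, Finset.mem_union_right _ hp, hs⟩
    · intro a q' h
      rcases Finset.mem_union.mp h with h | h
      · obtain ⟨p, hp, hs⟩ := a3 a q' h
        exact ⟨p, Finset.mem_union_left _ hp, hs⟩
      · obtain ⟨p, hp, hs⟩ := b3 a q' h
        exact ⟨p, Finset.mem_union_right _ hp, hs⟩

theorem act_cong {n : ℕ} {a : A} {x y : Exp A} (h : Strat dest n x y) :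
    Strat dest (n+1) (Exp.act a x) (Exp.act a y) := by
  refine ⟨?_, ?_, ?_⟩
  · intro v
    show Sum.inr v ∈ ({Sum.inl (a, x)} : Finset _) ↔ Sum.inr v ∈ ({Sum.inl (a, y)} : Finset _)
    simp
  · intro b q' hb
    simp only [dest, Finset.mem_singleton, Sum.inl.injEq, Prod.mk.injEq] at hb
    obtain ⟨rfl, rfl⟩ := hb
    exact ⟨y, by simp [dest], h⟩
  · intro b q' hb
    simp only [dest, Finset.mem_singleton, Sum.inl.injEq, Prod.mk.injEq] at hb
    obtain ⟨rfl, rfl⟩ := hb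
    exact ⟨x, by simp [dest], h⟩

theorem subst_mu_chain {n : ℕ} (hA : AcongP A n) (hB : BcompP A n)
    (t t' : Exp A) (w : ℕ) (σ : ℕ → Exp A) (hfv : fv t' ⊆ fv t) :
    Strat dest n
      (subst (Function.update Exp.var (bindV σ w t) (subst σ (.mu w t)))
        (subst (Function.update σ w (.var (bindV σ w t))) t'))
      (subst σ (subst (Function.update Exp.var w (.mu w t)) t')) := by
  have h1 := hB t' (Function.update σ w (.var (bindV σ w t)))
    (Function.update Exp.var (bindV σ w t) (subst σ (.mu w t)))
  have h2 := hB t' (Function.update Exp.var w (.mu w t)) σ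
  have hEXT : subst (fun u => subst (Function.update Exp.var (bindV σ w t) (subst σ (.mu w t)))
        ((Function.update σ w (.var (bindV σ w t))) u)) t'
      = subst (fun u => subst σ ((Function.update Exp.var w (.mu w t)) u)) t' := by
    refine subst_ext fun u hu => ?_
    rcases eq_or_ne u w with heq | huw
    · rw [heq, Function.update_self, Function.update_self]
      show (Function.update Exp.var (bindV σ w t) (subst σ (.mu w t))) (bindV σ w t) = _
      rw [Function.update_self]
    · rw [Function.update_of_ne huw, Function.update_of_ne huw]
      show subst _ (σ u) = subst σ (Exp.var u)
      show subst _ (σ u) = σ u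
      refine subst_fv_id fun p hp => ?_
      rw [Function.update_of_ne]
      rintro rfl
      exact bindV_not_mem_fv (hfv hu) huw hp
  exact strat_trans h1 (hEXT ▸ strat_symm h2)

theorem cfwd_step {n : ℕ} (hA : AcongP A n) (hB : BcompP A n) :
    ∀ (e : Exp A) (σ : ℕ → Exp A) (a : A) (x : Exp A),
      Sum.inl (a, x) ∈ dest (subst σ e) →
      (∃ t', Sum.inl (a, t') ∈ dest e ∧ Strat dest n x (subst σ t')) ∨
      (∃ w, Sum.inr w ∈ dest e ∧ Sum.inl (a, x) ∈ dest (σ w)) := by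
  intro e
  induction e with
  | zero => intro σ a x h; simp [subst, dest] at h
  | var v => intro σ a x h; exact Or.inr ⟨v, by simp [dest], h⟩
  | act b t ih =>
    intro σ a x h
    simp only [subst, dest, Finset.mem_singleton, Sum.inl.injEq, Prod.mk.injEq] at h
    obtain ⟨rfl, rfl⟩ := h
    exact Or.inl ⟨t, by simp [dest], strat_refl n _⟩
  | plus t₁ t₂ ih₁ ih₂ =>
    intro σ a x h
    have h' : Sum.inl (a, x) ∈ dest (subst σ t₁) ∪ dest (subst σ t₂) := h
    rcases Finset.mem_union.mp h' with h'' | h''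
    · rcases ih₁ σ a x h'' with ⟨t', ht', hs⟩ | ⟨u, hu, hx⟩
      · exact Or.inl ⟨t', Finset.mem_union_left _ ht', hs⟩
      · exact Or.inr ⟨u, Finset.mem_union_left _ hu, hx⟩
    · rcases ih₂ σ a x h'' with ⟨t', ht', hs⟩ | ⟨u, hu, hx⟩
      · exact Or.inl ⟨t', Finset.mem_union_right _ ht', hs⟩
      · exact Or.inr ⟨u, Finset.mem_union_right _ hu, hx⟩
  | mu w t ih =>
    intro σ a x h
    rw [subst_mu] at h
    obtain ⟨x₀, hx₀, rfl⟩ := inl_mem_dest_mu_iff.mp h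
    rcases ih (Function.update σ w (.var (bindV σ w t))) a x₀ hx₀ with
      ⟨t', ht', hs⟩ | ⟨u, hu, hx⟩
    · refine Or.inl ⟨Exp.subst1 t' w (.mu w t),
        inl_mem_dest_mu_iff.mpr ⟨t', ht', rfl⟩, ?_⟩
      have step1 : Strat dest n
          (subst (Function.update Exp.var (bindV σ w t) (subst σ (.mu w t))) x₀)
          (subst (Function.update Exp.var (bindV σ w t) (subst σ (.mu w t)))
            (subst (Function.update σ w (.var (bindV σ w t))) t')) :=
        hA _ _ _ _ hs fun _ => strat_refl n _
      exact strat_trans step1 (subst_mu_chain hA hB t t' w σ (fv_step ht'))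
    · have huw : u ≠ w := by
        rintro rfl
        rw [Function.update_self] at hx
        simp [dest] at hx
      rw [Function.update_of_ne huw] at hx
      have hxx : Exp.subst1 x₀ (bindV σ w t)
          (.mu (bindV σ w t) (subst (Function.update σ w (.var (bindV σ w t))) t)) = x₀ := by
        refine subst_fv_id fun p hp => ?_
        rw [Function.update_of_ne]
        rintro rfl
        exact bindV_not_mem_fv (out_fv hu) huw (fv_step hx hp)
      rw [hxx]
      exact Or.inr ⟨u, inr_mem_dest_mu_iff.mpr ⟨hu, huw⟩, hx⟩

theorem dbwd_step {n : ℕ} (hA : AcongP A n) (hB : BcompP A n) :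
    ∀ (e : Exp A) (σ : ℕ → Exp A) (a : A) (t' : Exp A),
      Sum.inl (a, t') ∈ dest e →
      ∃ x, Sum.inl (a, x) ∈ dest (subst σ e) ∧ Strat dest n x (subst σ t') := by
  intro e
  induction e with
  | zero => intro σ a t' h; simp [dest] at h
  | var v => intro σ a t' h; simp [dest] at h
  | act b t ih =>
    intro σ a t' h
    simp only [dest, Finset.mem_singleton, Sum.inl.injEq, Prod.mk.injEq] at h
    obtain ⟨rfl, rfl⟩ := h
    exact ⟨subst σ t', by simp [subst, dest], strat_refl n _⟩
  | plus t₁ t₂ ih₁ ih₂ =>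
    intro σ a t' h
    rcases Finset.mem_union.mp h with h' | h'
    · obtain ⟨x, hx, hs⟩ := ih₁ σ a t' h'
      exact ⟨x, Finset.mem_union_left _ hx, hs⟩
    · obtain ⟨x, hx, hs⟩ := ih₂ σ a t' h'
      exact ⟨x, Finset.mem_union_right _ hx, hs⟩
  | mu w t ih =>
    intro σ a t'' h
    obtain ⟨t', ht', rfl⟩ := inl_mem_dest_mu_iff.mp h
    obtain ⟨x₀, hx₀, hs⟩ := ih (Function.update σ w (.var (bindV σ w t))) a t' ht'
    refine ⟨Exp.subst1 x₀ (bindV σ w t)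
        (.mu (bindV σ w t) (subst (Function.update σ w (.var (bindV σ w t))) t)), ?_, ?_⟩
    · rw [subst_mu]
      exact inl_mem_dest_mu_iff.mpr ⟨x₀, hx₀, rfl⟩
    · have step1 : Strat dest n
          (subst (Function.update Exp.var (bindV σ w t) (subst σ (.mu w t))) x₀)
          (subst (Function.update Exp.var (bindV σ w t) (subst σ (.mu w t)))
            (subst (Function.update σ w (.var (bindV σ w t))) t')) :=
        hA _ _ _ _ hs fun _ => strat_refl n _
      exact strat_trans step1 (subst_mu_chain hA hB t t' w σ (fv_step ht'))

theorem mu_fwd {n : ℕ} (hA : AcongP A n) (hMu : MuP A n) :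
    ∀ (e f : Exp A) (v : ℕ), Strat dest (n+1) e f →
      ∀ (a : A) (z : Exp A), Sum.inl (a, z) ∈ dest (Exp.mu v e) →
        ∃ z', Sum.inl (a, z') ∈ dest (Exp.mu v f) ∧ Strat dest n z z' := by
  rintro e f v ⟨h1, h2, h3⟩ a z hz
  obtain ⟨e', he', rfl⟩ := inl_mem_dest_mu_iff.mp hz
  obtain ⟨f', hf', hs⟩ := h2 a e' he'
  refine ⟨Exp.subst1 f' v (.mu v f), inl_mem_dest_mu_iff.mpr ⟨f', hf', rfl⟩, ?_⟩
  refine hA _ _ _ _ hs fun u => ?_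
  rcases eq_or_ne u v with heq | huv
  · rw [heq, Function.update_self, Function.update_self]
    exact hMu e f v (strat_succ_le ⟨h1, h2, h3⟩)
  · rw [Function.update_of_ne huv, Function.update_of_ne huv]
    exact strat_refl n _

theorem mu_step {n : ℕ} (hA : AcongP A n) (hMu : MuP A n) : MuP A (n+1) := by
  intro e f v h
  refine ⟨?_, ?_, ?_⟩
  · intro u
    rw [inr_mem_dest_mu_iff, inr_mem_dest_mu_iff]
    rw [h.1 u]
  · intro a z hz
    exact mu_fwd hA hMu e f v h a z hz
  · intro a z hz
    obtain ⟨z', hz', hs⟩ := mu_fwd hA hMu f e v (strat_symm h) a z hz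
    exact ⟨z', hz', strat_symm hs⟩

theorem alpha_out {t : Exp A} {w : ℕ} {ρ : ℕ → Exp A} {b : ℕ} (hb : b ∉ bindS ρ w t)
    {u : ℕ} : Sum.inr u ∈ dest (Exp.mu b (subst (Function.update ρ w (.var b)) t)) ↔
      ∃ p, Sum.inr p ∈ dest t ∧ p ≠ w ∧ Sum.inr u ∈ dest (ρ p) := by
  rw [inr_mem_dest_mu_iff, out_subst]
  constructor
  · rintro ⟨⟨p, hp, hu⟩, hub⟩
    rcases eq_or_ne p w with rfl | hpw
    · rw [Function.update_self] at hu
      simp only [dest, Finset.mem_singleton, Sum.inr.injEq] at hu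
      exact absurd hu hub
    · rw [Function.update_of_ne hpw] at hu
      exact ⟨p, hp, hpw, hu⟩
  · rintro ⟨p, hp, hpw, hu⟩
    refine ⟨⟨p, hp, by rw [Function.update_of_ne hpw]; exact hu⟩, ?_⟩
    rintro rfl
    refine hb (Finset.mem_biUnion.mpr ⟨p, Finset.mem_erase.mpr ⟨hpw, out_fv hp⟩, out_fv hu⟩)

theorem alpha_fwd {n : ℕ} (hA : AcongP A n) (hB : BcompP A n) (hAl : AlphaP A n)
    (t : Exp A) (w : ℕ) (ρ : ℕ → Exp A) (b c : ℕ)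
    (hb : b ∉ bindS ρ w t) (hc : c ∉ bindS ρ w t) :
    ∀ (a : A) (z : Exp A),
      Sum.inl (a, z) ∈ dest (Exp.mu b (subst (Function.update ρ w (.var b)) t)) →
      ∃ z', Sum.inl (a, z') ∈ dest (Exp.mu c (subst (Function.update ρ w (.var c)) t)) ∧
        Strat dest n z z' := by
  intro a z hz
  set B := subst (Function.update ρ w (.var b)) t with hBdef
  set C := subst (Function.update ρ w (.var c)) t with hCdef
  obtain ⟨x, hx, rfl⟩ := inl_mem_dest_mu_iff.mp hz
  have key : ∀ (d : ℕ) (D : Exp A), D = subst (Function.update ρ w (.var d)) t →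
      d ∉ bindS ρ w t →
      ∀ t₀ : Exp A, fv t₀ ⊆ fv t →
      Strat dest n (subst (Function.update Exp.var d (.mu d D))
          (subst (Function.update ρ w (.var d)) t₀))
        (subst (Function.update ρ w (.mu d D)) t₀) := by
    intro d D hD hd t₀ hfv
    have h2 := hB t₀ (Function.update ρ w (.var d)) (Function.update Exp.var d (.mu d D))
    have hEXT : subst (fun u => subst (Function.update Exp.var d (.mu d D))
          ((Function.update ρ w (.var d)) u)) t₀
        = subst (Function.update ρ w (.mu d D)) t₀ := by
      refine subst_ext fun u hu => ?_
      rcases eq_or_ne u w with heq | huw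
      · rw [heq, Function.update_self, Function.update_self]
        show (Function.update Exp.var d (.mu d D)) d = _
        rw [Function.update_self]
      · rw [Function.update_of_ne huw, Function.update_of_ne huw]
        refine subst_fv_id fun p hp => ?_
        rw [Function.update_of_ne]
        rintro rfl
        exact hd (Finset.mem_biUnion.mpr ⟨u, Finset.mem_erase.mpr ⟨huw, hfv hu⟩, hp⟩)
    exact hEXT ▸ h2
  rcases cfwd_step hA hB t (Function.update ρ w (.var b)) a x hx with
    ⟨t', ht', hs⟩ | ⟨u, hu, hxu⟩
  · obtain ⟨y, hy, hys⟩ := dbwd_step hA hB t (Function.update ρ w (.var c)) a t' ht'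
    refine ⟨Exp.subst1 y c (.mu c C), inl_mem_dest_mu_iff.mpr ⟨y, hy, rfl⟩, ?_⟩
    have L1 : Strat dest n (subst (Function.update Exp.var b (.mu b B)) x)
        (subst (Function.update Exp.var b (.mu b B))
          (subst (Function.update ρ w (.var b)) t')) :=
      hA _ _ _ _ hs fun _ => strat_refl n _
    have L2 := key b B hBdef hb t' (fv_step ht')
    have L3 : Strat dest n (subst (Function.update ρ w (.mu b B)) t')
        (subst (Function.update ρ w (.mu c C)) t') := by
      refine hA _ _ _ _ (strat_refl n t') fun u => ?_
      rcases eq_or_ne u w with heq | huw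
      · rw [heq, Function.update_self, Function.update_self]
        exact hAl t w ρ b c hb hc
      · rw [Function.update_of_ne huw, Function.update_of_ne huw]
        exact strat_refl n _
    have R1 : Strat dest n (subst (Function.update Exp.var c (.mu c C)) y)
        (subst (Function.update Exp.var c (.mu c C))
          (subst (Function.update ρ w (.var c)) t')) :=
      hA _ _ _ _ hys fun _ => strat_refl n _
    have R2 := key c C hCdef hc t' (fv_step ht')
    exact strat_trans (strat_trans (strat_trans L1 L2) L3)
      (strat_symm (strat_trans R1 R2))
  · have huw : u ≠ w := by
      rintro rfl
      rw [Function.update_self] at hxu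
      simp [dest] at hxu
    rw [Function.update_of_ne huw] at hxu
    have hfvx : fv x ⊆ fv (ρ u) := fv_step hxu
    have hbx : b ∉ fv x := fun h => hb
      (Finset.mem_biUnion.mpr ⟨u, Finset.mem_erase.mpr ⟨huw, out_fv hu⟩, hfvx h⟩)
    have hcx : c ∉ fv x := fun h => hc
      (Finset.mem_biUnion.mpr ⟨u, Finset.mem_erase.mpr ⟨huw, out_fv hu⟩, hfvx h⟩)
    have hxC : Sum.inl (a, x) ∈ dest C := by
      refine inl_subst_of_out hu ?_
      rw [Function.update_of_ne huw]
      exact hxu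
    refine ⟨Exp.subst1 x c (.mu c C), inl_mem_dest_mu_iff.mpr ⟨x, hxC, rfl⟩, ?_⟩
    have e1 : Exp.subst1 x b (.mu b B) = x :=
      subst_fv_id fun p hp => Function.update_of_ne (fun h => hbx (by rw [← h]; exact hp)) _ _
    have e2 : Exp.subst1 x c (.mu c C) = x :=
      subst_fv_id fun p hp => Function.update_of_ne (fun h => hcx (by rw [← h]; exact hp)) _ _
    rw [e1, e2]
    exact strat_refl n _

theorem alpha_step {n : ℕ} (hA : AcongP A n) (hB : BcompP A n) (hAl : AlphaP A n) :
    AlphaP A (n+1) := by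
  intro t w ρ b c hb hc
  refine ⟨?_, ?_, ?_⟩
  · intro u
    rw [alpha_out hb, alpha_out hc]
  · exact fun a z hz => alpha_fwd hA hB hAl t w ρ b c hb hc a z hz
  · intro a z hz
    obtain ⟨z', hz', hs⟩ := alpha_fwd hA hB hAl t w ρ c b hc hb a z hz
    exact ⟨z', hz', strat_symm hs⟩

theorem acong_fwd {n : ℕ} (hA : AcongP A n) (hB : BcompP A n) :
    ∀ (e f : Exp A) (σ τ : ℕ → Exp A), Strat dest (n+1) e f →
      (∀ w, Strat dest (n+1) (σ w) (τ w)) →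
      ∀ (a : A) (x : Exp A), Sum.inl (a, x) ∈ dest (subst σ e) →
        ∃ y, Sum.inl (a, y) ∈ dest (subst τ f) ∧ Strat dest n x y := by
  intro e f σ τ hef hστ a x hx
  rcases cfwd_step hA hB e σ a x hx with ⟨e', he', hs⟩ | ⟨w, hw, hxw⟩
  · obtain ⟨f', hf', hs'⟩ := hef.2.1 a e' he'
    obtain ⟨y, hy, hys⟩ := dbwd_step hA hB f τ a f' hf'
    refine ⟨y, hy, ?_⟩
    have mid : Strat dest n (subst σ e') (subst τ f') :=
      hA _ _ _ _ hs' fun w => strat_succ_le (hστ w)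
    exact strat_trans (strat_trans hs mid) (strat_symm hys)
  · have hwf : Sum.inr w ∈ dest f := (hef.1 w).mp hw
    obtain ⟨y, hy, hys⟩ := (hστ w).2.1 a x hxw
    exact ⟨y, inl_subst_of_out hwf hy, hys⟩

theorem acong_step {n : ℕ} (hA : AcongP A n) (hB : BcompP A n) : AcongP A (n+1) := by
  intro e f σ τ hef hστ
  refine ⟨?_, ?_, ?_⟩
  · intro u
    rw [out_subst, out_subst]
    constructor
    · rintro ⟨w, hw, hu⟩
      exact ⟨w, (hef.1 w).mp hw, ((hστ w).1 u).mp hu⟩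
    · rintro ⟨w, hw, hu⟩
      exact ⟨w, (hef.1 w).mpr hw, ((hστ w).1 u).mpr hu⟩
  · exact fun a x hx => acong_fwd hA hB e f σ τ hef hστ a x hx
  · intro a y hy
    obtain ⟨x, hx, hs⟩ := acong_fwd hA hB f e τ σ (strat_symm hef)
      (fun w => strat_symm (hστ w)) a y hy
    exact ⟨x, hx, strat_symm hs⟩

theorem bcomp_step {n : ℕ} (hMu : MuP A (n+1)) (hAl : AlphaP A (n+1)) : BcompP A (n+1) := by
  intro e
  induction e with
  | zero => intro σ τ; exact strat_refl _ _
  | var v => intro σ τ; exact strat_refl _ _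
  | act a t ih =>
    intro σ τ
    exact act_cong (strat_succ_le (ih σ τ))
  | plus t₁ t₂ ih₁ ih₂ =>
    intro σ τ
    exact plus_cong (ih₁ σ τ) (ih₂ σ τ)
  | mu w t ih =>
    intro σ τ
    set w₁ := bindV σ w t with hw₁
    set σ₁ := Function.update σ w (.var w₁) with hσ₁
    set s := subst σ₁ t with hs
    set w₂ := bindV τ w₁ s with hw₂
    set τ₂ := Function.update τ w₁ (.var w₂) with hτ₂
    set ρ : ℕ → Exp A := fun u => subst τ (σ u) with hρ
    set w₃ := bindV ρ w t with hw₃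
    have goal_eq₁ : subst τ (subst σ (.mu w t)) = .mu w₂ (subst τ₂ s) := by
      rw [subst_mu, subst_mu]
    have goal_eq₂ : subst ρ (.mu w t) = .mu w₃ (subst (Function.update ρ w (.var w₃)) t) :=
      subst_mu ρ w t
    rw [goal_eq₁, goal_eq₂]
    have hfresh1 : ∀ u ∈ (fv t).erase w, w₁ ∉ fv (σ u) := by
      intro u hu
      obtain ⟨huw, hut⟩ := Finset.mem_erase.mp hu
      exact bindV_not_mem_fv hut huw
    have hsub : bindS ρ w t ⊆ bindS τ w₁ s := by
      intro q hq
      obtain ⟨u, hu, hq⟩ := Finset.mem_biUnion.mp hq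
      obtain ⟨huw, hut⟩ := Finset.mem_erase.mp hu
      rw [hρ] at hq
      rw [fv_subst] at hq
      obtain ⟨p, hp, hq⟩ := Finset.mem_biUnion.mp hq
      refine Finset.mem_biUnion.mpr ⟨p, Finset.mem_erase.mpr ⟨?_, ?_⟩, hq⟩
      · rintro rfl
        exact hfresh1 u hu hp
      · rw [hs, fv_subst]
        refine Finset.mem_biUnion.mpr ⟨u, hut, ?_⟩
        rw [hσ₁, Function.update_of_ne huw]
        exact hp
    have hfresh2 : w₂ ∉ bindS ρ w t := fun h => bindV_not_mem τ w₁ s (hsub h)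
    have hfresh3 : w₃ ∉ bindS ρ w t := bindV_not_mem ρ w t
    have hIH : Strat dest (n+1) (subst τ₂ s) (subst (fun u => subst τ₂ (σ₁ u)) t) := ih σ₁ τ₂
    have hEXT : subst (fun u => subst τ₂ (σ₁ u)) t
        = subst (Function.update ρ w (.var w₂)) t := by
      refine subst_ext fun u hu => ?_
      rcases eq_or_ne u w with heq | huw
      · rw [heq, hσ₁, Function.update_self, Function.update_self]
        show τ₂ w₁ = _
        rw [hτ₂, Function.update_self]
      · rw [hσ₁, Function.update_of_ne huw, Function.update_of_ne huw]
        rw [hρ]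
        refine subst_ext fun p hp => ?_
        rw [hτ₂, Function.update_of_ne]
        rintro rfl
        exact hfresh1 u (Finset.mem_erase.mpr ⟨huw, hu⟩) hp
    rw [hEXT] at hIH
    have h1 : Strat dest (n+1) (.mu w₂ (subst τ₂ s))
        (.mu w₂ (subst (Function.update ρ w (.var w₂)) t)) := hMu _ _ w₂ hIH
    have h2 : Strat dest (n+1) (.mu w₂ (subst (Function.update ρ w (.var w₂)) t))
        (.mu w₃ (subst (Function.update ρ w (.var w₃)) t)) :=
      hAl t w ρ w₂ w₃ hfresh2 hfresh3
    exact strat_trans h1 h2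

theorem pack (n : ℕ) : AcongP A n ∧ BcompP A n ∧ AlphaP A n ∧ MuP A n := by
  induction n with
  | zero =>
    exact ⟨fun _ _ _ _ _ _ => trivial, fun _ _ _ => trivial,
      fun _ _ _ _ _ _ _ => trivial, fun _ _ _ _ => trivial⟩
  | succ n ih =>
    obtain ⟨hA, hB, hAl, hMu⟩ := ih
    have hMu' : MuP A (n+1) := mu_step hA hMu
    have hAl' : AlphaP A (n+1) := alpha_step hA hB hAl
    have hA' : AcongP A (n+1) := acong_step hA hB
    have hB' : BcompP A (n+1) := bcomp_step hMu' hAl'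
    exact ⟨hA', hB', hAl', hMu'⟩

end Pack
end MuAux

namespace MuAux
open Exp Sum

section HD

theorem le_hSup {Y : Type*} {s : Finset Y} {f : Y → ℝ} {x : Y} (hx : x ∈ s) :
    f x ≤ hSup s f := by
  unfold hSup
  rw [dif_pos ⟨x, hx⟩]
  exact Finset.le_sup' f hx

theorem hSup_le {Y : Type*} {s : Finset Y} {f : Y → ℝ} {c : ℝ} (hc : 0 ≤ c)
    (h : ∀ x ∈ s, f x ≤ c) : hSup s f ≤ c := by
  unfold hSup
  split
  · exact Finset.sup'_le _ _ h
  · exact hc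

theorem hSup_nonneg {Y : Type*} {s : Finset Y} {f : Y → ℝ} (h : ∀ x ∈ s, 0 ≤ f x) :
    0 ≤ hSup s f := by
  unfold hSup
  split
  · next hne => obtain ⟨x, hx⟩ := hne; exact (h x hx).trans (Finset.le_sup' f hx)
  · exact le_refl 0

theorem hInf_le {Y : Type*} {s : Finset Y} {f : Y → ℝ} {x : Y} (hx : x ∈ s) :
    hInf s f ≤ f x := by
  unfold hInf
  rw [dif_pos ⟨x, hx⟩]
  exact Finset.inf'_le f hx

theorem le_hInf {Y : Type*} {s : Finset Y} {f : Y → ℝ} {c : ℝ} (hc : c ≤ 1)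
    (h : ∀ x ∈ s, c ≤ f x) : c ≤ hInf s f := by
  unfold hInf
  split
  · exact Finset.le_inf' _ _ h
  · exact hc

theorem hInf_le_one {Y : Type*} {s : Finset Y} {f : Y → ℝ} (h : ∀ x ∈ s, f x ≤ 1) :
    hInf s f ≤ 1 := by
  unfold hInf
  split
  · next hne => obtain ⟨x, hx⟩ := hne; exact (Finset.inf'_le f hx).trans (h x hx)
  · exact le_refl 1

theorem hInf_nonneg {Y : Type*} {s : Finset Y} {f : Y → ℝ} (h : ∀ x ∈ s, 0 ≤ f x) :
    0 ≤ hInf s f := by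
  unfold hInf
  split
  · exact Finset.le_inf' _ _ h
  · exact zero_le_one

end HD

section DistLift
variable {A V X : Type*} {d : X → X → ℝ}

open Classical in
theorem distLift_inl_inl (d : X → X → ℝ) (a b : A) (x y : X) :
    distLift (V := V) d (Sum.inl (a, x)) (Sum.inl (b, y))
      = if a = b then (1 / 2) * d x y else 1 := rfl

theorem distLift_inl_inr (d : X → X → ℝ) (a : A) (x : X) (v : V) :
    distLift d (Sum.inl (a, x)) (Sum.inr v) = 1 := rfl

theorem distLift_inr_inl (d : X → X → ℝ) (a : A) (x : X) (v : V) :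
    distLift d (Sum.inr v) (Sum.inl (a, x)) = 1 := rfl

open Classical in
theorem distLift_inr_inr (d : X → X → ℝ) (v w : V) :
    distLift (A := A) (X := X) d (Sum.inr v) (Sum.inr w) = if v = w then 0 else 1 := rfl

theorem distLift_nonneg (hd : ∀ p q, 0 ≤ d p q) :
    ∀ m m' : (A × X) ⊕ V, 0 ≤ distLift d m m' := by
  rintro (⟨a, x⟩ | v) (⟨b, y⟩ | w)
  · rw [distLift_inl_inl]
    split
    · have := hd x y; linarith
    · exact zero_le_one
  · rw [distLift_inl_inr]; exact zero_le_one
  · rw [distLift_inr_inl]; exact zero_le_one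
  · rw [distLift_inr_inr]
    split
    · exact le_refl 0
    · exact zero_le_one

theorem distLift_le_one (hd0 : ∀ p q, 0 ≤ d p q) (hd1 : ∀ p q, d p q ≤ 1) :
    ∀ m m' : (A × X) ⊕ V, distLift d m m' ≤ 1 := by
  rintro (⟨a, x⟩ | v) (⟨b, y⟩ | w)
  · rw [distLift_inl_inl]
    split
    · nlinarith [hd0 x y, hd1 x y]
    · exact le_refl 1
  · rw [distLift_inl_inr]
  · rw [distLift_inr_inl]
  · rw [distLift_inr_inr]
    split
    · exact zero_le_one
    · exact le_refl 1

end DistLift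

section Metric
set_option linter.unusedSectionVars false
set_option maxHeartbeats 1000000
variable {A : Type*} [DecidableEq A]

open Classical in
/-- One term of the defining infimum of the behavioural distance. -/
noncomputable def Dterm (x y : Exp A) (n : ℕ) : ℝ :=
  if Strat dest n x y then (1/2 : ℝ)^n else 1

/-- The behavioural distance, described through the stratification of bisimilarity. -/
noncomputable def Dfun (x y : Exp A) : ℝ := ⨅ n : ℕ, Dterm x y n

theorem Dterm_nonneg {x y : Exp A} (n : ℕ) : 0 ≤ Dterm x y n := by
  unfold Dterm; split
  · positivity
  · exact zero_le_one

theorem Dterm_le_one {x y : Exp A} (n : ℕ) : Dterm x y n ≤ 1 := by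
  unfold Dterm; split
  · exact pow_le_one₀ (by norm_num) (by norm_num)
  · exact le_refl 1

theorem Dterm_bddBelow (x y : Exp A) : BddBelow (Set.range (Dterm x y)) := by
  refine ⟨0, ?_⟩
  rintro r ⟨n, rfl⟩
  exact Dterm_nonneg n

theorem Dfun_le_pow {x y : Exp A} {n : ℕ} (h : Strat dest n x y) :
    Dfun x y ≤ (1/2 : ℝ)^n := by
  have := ciInf_le (Dterm_bddBelow x y) n
  rwa [Dterm, if_pos h] at this

theorem Dfun_nonneg (x y : Exp A) : 0 ≤ Dfun x y :=
  le_ciInf fun n => Dterm_nonneg n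

theorem Dfun_le_one (x y : Exp A) : Dfun x y ≤ 1 := by
  have := Dfun_le_pow (strat_zero (β := dest) x y)
  simpa using this

theorem pow_le_Dfun {x y : Exp A} {n : ℕ} (h : ¬ Strat dest (n+1) x y) :
    (1/2 : ℝ)^n ≤ Dfun x y := by
  refine le_ciInf fun m => ?_
  unfold Dterm
  split
  · next hm =>
    have hmn : m ≤ n := by
      by_contra h'
      exact h (strat_antitone (by omega) hm)
    exact pow_le_pow_of_le_one (by norm_num) (by norm_num) hmn
  · exact pow_le_one₀ (by norm_num) (by norm_num)

theorem Dfun_eq_zero {x y : Exp A} (h : ∀ n, Strat dest n x y) : Dfun x y = 0 := by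
  refine le_antisymm ?_ (Dfun_nonneg x y)
  by_contra h'
  push_neg at h'
  obtain ⟨n, hn⟩ := exists_pow_lt_of_lt_one h' (by norm_num : (1/2 : ℝ) < 1)
  exact absurd (Dfun_le_pow (h n)) (not_le.mpr hn)

theorem Dfun_cases (x y : Exp A) :
    (∀ n, Strat dest n x y) ∨
    ∃ M, Strat dest M x y ∧ ¬ Strat dest (M+1) x y ∧ Dfun x y = (1/2 : ℝ)^M := by
  by_cases h : ∀ n, Strat dest n x y
  · exact Or.inl h
  · push_neg at h
    have hex : ∃ n, ¬ Strat dest n x y := h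
    right
    classical
    have hNpos : Nat.find hex ≠ 0 := fun h0 => (h0 ▸ Nat.find_spec hex) (strat_zero x y)
    obtain ⟨M, hMeq⟩ : ∃ M, Nat.find hex = M + 1 := ⟨Nat.find hex - 1, by omega⟩
    have hM : Strat dest M x y :=
      not_not.mp (Nat.find_min hex (show M < Nat.find hex by omega))
    have hfail : ¬ Strat dest (M+1) x y := hMeq ▸ Nat.find_spec hex
    exact ⟨M, hM, hfail, le_antisymm (Dfun_le_pow hM) (pow_le_Dfun hfail)⟩

theorem Dfun_symm (x y : Exp A) : Dfun x y = Dfun y x := by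
  unfold Dfun
  congr 1
  funext n
  unfold Dterm
  by_cases h : Strat dest n x y
  · rw [if_pos h, if_pos (strat_symm h)]
  · rw [if_neg h, if_neg (fun h' => h (strat_symm h'))]

theorem Dfun_triangle (x y z : Exp A) : Dfun x z ≤ Dfun x y + Dfun y z := by
  rcases Dfun_cases x z with h | ⟨M, hM, hM1, hMeq⟩
  · rw [Dfun_eq_zero h]
    exact add_nonneg (Dfun_nonneg x y) (Dfun_nonneg y z)
  · rw [hMeq]
    have : ¬ Strat dest (M+1) x y ∨ ¬ Strat dest (M+1) y z := by
      by_contra hc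
      push_neg at hc
      exact hM1 (strat_trans hc.1 hc.2)
    rcases this with h | h
    · have := pow_le_Dfun h
      have h2 := Dfun_nonneg y z
      linarith
    · have := pow_le_Dfun h
      have h2 := Dfun_nonneg x y
      linarith

theorem Dfun_isBPMet : IsBPMet (Dfun (A := A)) := by
  refine ⟨Dfun_nonneg, Dfun_le_one, ?_, Dfun_symm, Dfun_triangle⟩
  intro x
  exact Dfun_eq_zero fun n => strat_refl n x

theorem exists_all_strat {x y : Exp A} (h : ∀ n, Strat dest n x y) {a : A} {x' : Exp A}
    (hx' : Sum.inl (a, x') ∈ dest x) :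
    ∃ y', Sum.inl (a, y') ∈ dest y ∧ ∀ n, Strat dest n x' y' := by
  by_contra hcon
  push_neg at hcon
  choose! N hN using hcon
  set K := (dest y).sup (fun m => Sum.elim (fun p : A × Exp A => N p.2) (fun _ : ℕ => 0) m)
    with hK
  obtain ⟨y', hy', hsy⟩ := (h (K+1)).2.1 a x' hx'
  have hKle : N y' ≤ K := by
    have := Finset.le_sup
      (f := fun m => Sum.elim (fun p : A × Exp A => N p.2) (fun _ : ℕ => 0) m) hy'
    simpa using this
  exact hN y' hy' (strat_antitone hKle hsy)

theorem phi_le_of {d : Exp A → Exp A → ℝ} {x y : Exp A} {c : ℝ} (hc : 0 ≤ c)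
    (hL : ∀ m ∈ dest x, hInf (dest y) (fun m' => distLift d m m') ≤ c)
    (hR : ∀ m' ∈ dest y, hInf (dest x) (fun m => distLift d m' m) ≤ c) :
    Phi dest d x y ≤ c :=
  max_le (hSup_le hc hL) (hSup_le hc hR)

theorem phi_nonneg {d : Exp A → Exp A → ℝ} (hd : ∀ p q, 0 ≤ d p q) (x y : Exp A) :
    0 ≤ Phi dest d x y := by
  refine le_trans ?_ (le_max_left _ _)
  exact hSup_nonneg fun m hm => hInf_nonneg fun m' hm' => distLift_nonneg hd m m'

theorem le_phi_of_not_strat {d : Exp A → Exp A → ℝ} (hd0 : ∀ p q, 0 ≤ d p q)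
    {n : ℕ}
    (hstep : ∀ p q : Exp A, ¬ Strat dest n p q → (1/2 : ℝ)^n ≤ (1/2) * d p q)
    {x y : Exp A} (hxy : ¬ Strat dest (n+1) x y) :
    (1/2 : ℝ)^n ≤ Phi dest d x y := by
  have hpow1 : (1/2 : ℝ)^n ≤ 1 := pow_le_one₀ (by norm_num) (by norm_num)
  by_cases hout : ∀ v : ℕ, Sum.inr v ∈ dest x ↔ Sum.inr v ∈ dest y
  · by_cases hfwd : ∀ (a : A) (x' : Exp A), Sum.inl (a, x') ∈ dest x →
        ∃ y', Sum.inl (a, y') ∈ dest y ∧ Strat dest n x' y'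
    · have hbwd : ¬ ∀ (a : A) (y' : Exp A), Sum.inl (a, y') ∈ dest y →
          ∃ x', Sum.inl (a, x') ∈ dest x ∧ Strat dest n x' y' := by
        intro hb
        exact hxy ⟨hout, hfwd, hb⟩
      push_neg at hbwd
      obtain ⟨a, y', hy', hall⟩ := hbwd
      refine le_trans ?_ (le_max_right _ _)
      refine le_trans ?_ (le_hSup hy')
      refine le_hInf hpow1 fun m hm => ?_
      match m with
      | Sum.inl (b, x') =>
        simp only [distLift_inl_inl]
        split
        · next hab =>
          subst hab
          exact hstep y' x' (fun hs => hall x' hm (strat_symm hs))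
        · exact hpow1
      | Sum.inr v => simp only [distLift_inl_inr]; exact hpow1
    · push_neg at hfwd
      obtain ⟨a, x', hx', hall⟩ := hfwd
      refine le_trans ?_ (le_max_left _ _)
      refine le_trans ?_ (le_hSup hx')
      refine le_hInf hpow1 fun m hm => ?_
      match m with
      | Sum.inl (b, y') =>
        simp only [distLift_inl_inl]
        split
        · next hab =>
          subst hab
          exact hstep x' y' (hall y' hm)
        · exact hpow1
      | Sum.inr v => simp only [distLift_inl_inr]; exact hpow1
  · push_neg at hout
    obtain ⟨v, hv⟩ := hout
    rcases hv with ⟨hvin, hvout⟩ | ⟨hvout, hvin⟩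
    · refine le_trans hpow1 ?_
      refine le_trans ?_ (le_max_left _ _)
      refine le_trans ?_ (le_hSup hvin)
      refine le_hInf (le_refl 1) fun m hm => ?_
      match m with
      | Sum.inl (b, y') => simp only [distLift_inr_inl]; exact le_refl 1
      | Sum.inr w =>
        simp only [distLift_inr_inr]
        split
        · next hvw => exact absurd (hvw ▸ hm) hvout
        · exact le_refl 1
    · refine le_trans hpow1 ?_
      refine le_trans ?_ (le_max_right _ _)
      refine le_trans ?_ (le_hSup hvin)
      refine le_hInf (le_refl 1) fun m hm => ?_
      match m with
      | Sum.inl (b, x') => simp only [distLift_inr_inl]; exact le_refl 1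
      | Sum.inr w =>
        simp only [distLift_inr_inr]
        split
        · next hvw => exact absurd (hvw ▸ hm) hvout
        · exact le_refl 1

end Metric
end MuAux

namespace MuAux
open Exp Sum

section Fix
set_option linter.unusedSectionVars false
set_option maxHeartbeats 1000000
variable {A : Type*} [DecidableEq A]

theorem phi_Dfun_zero {x y : Exp A} (h : ∀ n, Strat dest n x y) :
    Phi dest Dfun x y = 0 := by
  refine le_antisymm ?_ (phi_nonneg Dfun_nonneg x y)
  refine phi_le_of (le_refl 0) ?_ ?_
  · intro m hm
    match m with
    | Sum.inr v =>
      have hv : Sum.inr v ∈ dest y := ((h 1).1 v).mp hm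
      refine le_trans (hInf_le hv) ?_
      simp [distLift_inr_inr]
    | Sum.inl (a, x') =>
      obtain ⟨y', hy', hall⟩ := exists_all_strat h hm
      refine le_trans (hInf_le hy') ?_
      have hz : Dfun x' y' = 0 := Dfun_eq_zero hall
      simp [distLift_inl_inl, hz]
  · intro m hm
    match m with
    | Sum.inr v =>
      have hv : Sum.inr v ∈ dest x := ((h 1).1 v).mpr hm
      refine le_trans (hInf_le hv) ?_
      simp [distLift_inr_inr]
    | Sum.inl (a, y') =>
      obtain ⟨x', hx', hall⟩ := exists_all_strat (fun n => strat_symm (h n)) hm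
      refine le_trans (hInf_le hx') ?_
      have hz : Dfun y' x' = 0 := Dfun_eq_zero hall
      simp [distLift_inl_inl, hz]

theorem phi_Dfun_le_pow {x y : Exp A} {n : ℕ} (h : Strat dest (n+1) x y) :
    Phi dest Dfun x y ≤ (1/2 : ℝ)^(n+1) := by
  refine phi_le_of (by positivity) ?_ ?_
  · intro m hm
    match m with
    | Sum.inr v =>
      refine le_trans (hInf_le ((h.1 v).mp hm)) ?_
      simp only [distLift_inr_inr, if_pos rfl]
      positivity
    | Sum.inl (a, x') =>
      obtain ⟨y', hy', hs⟩ := h.2.1 a x' hm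
      refine le_trans (hInf_le hy') ?_
      have hD := Dfun_le_pow hs
      simp only [distLift_inl_inl, if_pos rfl]
      calc (1/2) * Dfun x' y' ≤ 1/2 * (1/2 : ℝ)^n := by linarith
        _ = (1/2 : ℝ)^(n+1) := by ring
  · intro m hm
    match m with
    | Sum.inr v =>
      refine le_trans (hInf_le ((h.1 v).mpr hm)) ?_
      simp only [distLift_inr_inr, if_pos rfl]
      positivity
    | Sum.inl (a, y') =>
      obtain ⟨x', hx', hs⟩ := h.2.2 a y' hm
      refine le_trans (hInf_le hx') ?_
      have hD := Dfun_le_pow (strat_symm hs)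
      simp only [distLift_inl_inl, if_pos rfl]
      calc (1/2) * Dfun y' x' ≤ 1/2 * (1/2 : ℝ)^n := by linarith
        _ = (1/2 : ℝ)^(n+1) := by ring

theorem phi_Dfun_eq (x y : Exp A) : Phi dest Dfun x y = Dfun x y := by
  rcases Dfun_cases x y with hall | ⟨M, hM, hM1, hMeq⟩
  · rw [Dfun_eq_zero hall, phi_Dfun_zero hall]
  · rw [hMeq]
    refine le_antisymm ?_ ?_
    · match M, hM with
      | 0, _ =>
        have h1 : Phi dest (Dfun (A := A)) x y ≤ 1 :=
          phi_le_of zero_le_one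
            (fun m hm => hInf_le_one fun m' hm' =>
              distLift_le_one Dfun_nonneg Dfun_le_one m m')
            (fun m' hm' => hInf_le_one fun m hm =>
              distLift_le_one Dfun_nonneg Dfun_le_one m' m)
        simpa using h1
      | (K+1), hM => exact phi_Dfun_le_pow hM
    · refine le_phi_of_not_strat Dfun_nonneg ?_ hM1
      intro p q hpq
      match M, hpq with
      | 0, hpq => exact absurd (strat_zero p q) hpq
      | (K+1), hpq =>
        have hK := pow_le_Dfun (n := K) hpq
        calc (1/2 : ℝ)^(K+1) = 1/2 * (1/2 : ℝ)^K := by ring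
          _ ≤ 1/2 * Dfun p q := by linarith

theorem bd_lower {bd : Exp A → Exp A → ℝ} (hbd : IsLfpDist dest bd) :
    ∀ (n : ℕ) (x y : Exp A), ¬ Strat dest (n+1) x y → (1/2 : ℝ)^n ≤ bd x y := by
  have hfix : ∀ x y : Exp A, Phi dest bd x y = bd x y :=
    fun x y => congrFun (congrFun hbd.2.1 x) y
  intro n
  induction n with
  | zero =>
    intro x y h
    have := le_phi_of_not_strat (d := bd) hbd.1.nonneg (n := 0)
      (fun p q hpq => absurd (strat_zero p q) hpq) h
    rwa [hfix] at this
  | succ n ih =>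
    intro x y h
    have := le_phi_of_not_strat (d := bd) hbd.1.nonneg (n := n+1)
      (fun p q hpq => by
        have hx := ih p q hpq
        calc (1/2 : ℝ)^(n+1) = 1/2 * (1/2 : ℝ)^n := by ring
          _ ≤ 1/2 * bd p q := by linarith) h
    rwa [hfix] at this

end Fix
end MuAux

open MuAux in
/-- the recursion operator `μv` preserves each level of the stratification
of bisimilarity, and consequently it is nonexpansive for the behavioural distance `bd`
(the least fixpoint of `Φ` for the prechart of Milner expressions). -/
theorem mu_strat_and_bd_nonexpansive {A : Type*} [DecidableEq A]
    (e f : Exp A) (v : ℕ) (bd : Exp A → Exp A → ℝ) (hbd : IsLfpDist dest bd) :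
    (∀ n : ℕ, Strat dest n e f → Strat dest n (Exp.mu v e) (Exp.mu v f)) ∧
    bd (Exp.mu v e) (Exp.mu v f) ≤ bd e f := by
  constructor
  · intro n h
    exact (pack n).2.2.2 e f v h
  · have hD : IsBPMet (Dfun (A := A)) := Dfun_isBPMet
    have hfixD : Phi dest (Dfun (A := A)) = Dfun :=
      funext fun x => funext fun y => phi_Dfun_eq x y
    have hle := hbd.2.2 Dfun hD hfixD
    have hge : ∀ x y : Exp A, Dfun x y ≤ bd x y := by
      intro x y
      rcases Dfun_cases x y with hall | ⟨M, hM, hM1, hMeq⟩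
      · rw [Dfun_eq_zero hall]
        exact hbd.1.nonneg x y
      · rw [hMeq]
        exact bd_lower hbd M x y hM1
    have hmono : Dfun (Exp.mu v e) (Exp.mu v f) ≤ Dfun e f := by
      show Dfun (Exp.mu v e) (Exp.mu v f) ≤ ⨅ n : ℕ, Dterm e f n
      refine le_ciInf fun n => ?_
      unfold Dterm
      split
      · next h => exact Dfun_le_pow ((pack n).2.2.2 e f v h)
      · exact Dfun_le_one _ _
    calc bd (Exp.mu v e) (Exp.mu v f) ≤ Dfun (Exp.mu v e) (Exp.mu v f) := hle _ _
      _ ≤ Dfun e f := hmono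
      _ ≤ bd e f := hge e f
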